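/- Let S be nearly epsilon-strongly G-graded. The map I ↦ I ∩ S_e is a bijection from the set of graded ideals of S onto the set of G-invariant ideals of S_e, with inverse J ↦ SJS. In particular, for any graded ideal I one has S(I ∩ S_e)S = S(I ∩ S_e) = (I ∩ S_e)S = I. -/

import Mathlib

open Pointwise

/-- The product `UV` of two subsets of a ring: the additive subgroup consisting of all
finite sums of products `u * v` with `u ∈ U`, `v ∈ V`. -/
def setProd {S : Type*} [NonUnitalRing S] (U V : Set S) : AddSubgroup S :=
  AddSubgroup.closure (U * V)

/-- For a `G`-graded ring with components `𝒮` and a subset `I ⊆ S`, the subset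
`I^x := S_{x⁻¹} I S_x` (finite sums of triple products). -/
def gradedConj {G : Type*} [Group G] {S : Type*} [NonUnitalRing S]
    (𝒮 : G → AddSubgroup S) (I : Set S) (x : G) : AddSubgroup S :=
  setProd ((setProd (𝒮 x⁻¹ : Set S) I : AddSubgroup S) : Set S) (𝒮 x : Set S)

/-- `I` is a (two-sided) ideal of the subring `T` of `S`. -/
def IsIdealOfComponent {S : Type*} [NonUnitalRing S] (T : AddSubgroup S)
    (I : AddSubgroup S) : Prop :=
  I ≤ T ∧ ∀ a ∈ T, ∀ b ∈ I, a * b ∈ I ∧ b * a ∈ I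

/-- For a two-sided ideal `J` of `S_e`, the set `SJS` (finite sums of products `s j t`). -/
def SJS {S : Type*} [NonUnitalRing S] (J : Set S) : AddSubgroup S :=
  setProd ((setProd (Set.univ : Set S) J : AddSubgroup S) : Set S) (Set.univ : Set S)

section Helpers

variable {S : Type*} [NonUnitalRing S]

theorem mem_setProd {A B : Set S} {a b : S} (ha : a ∈ A) (hb : b ∈ B) :
    a * b ∈ setProd A B :=
  AddSubgroup.subset_closure (Set.mul_mem_mul ha hb)

theorem setProd_induction {A B : Set S} {p : S → Prop}
    (hmem : ∀ a ∈ A, ∀ b ∈ B, p (a * b)) (h0 : p 0)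
    (hadd : ∀ x y, p x → p y → p (x + y)) (hneg : ∀ x, p x → p (-x)) :
    ∀ x ∈ setProd A B, p x := by
  intro x hx
  refine AddSubgroup.closure_induction (p := fun g _ => p g) ?_ h0
    (fun x y _ _ => hadd x y) (fun x _ => hneg x) hx
  rintro _ ⟨a, ha, b, hb, rfl⟩
  exact hmem a ha b hb

theorem mem_tripleProd {A B C : Set S} {a b c : S} (ha : a ∈ A) (hb : b ∈ B) (hc : c ∈ C) :
    a * b * c ∈ setProd ((setProd A B : AddSubgroup S) : Set S) C :=
  mem_setProd (mem_setProd ha hb) hc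

theorem tripleProd_induction {A B C : Set S} {p : S → Prop}
    (hmem : ∀ a ∈ A, ∀ b ∈ B, ∀ c ∈ C, p (a * b * c)) (h0 : p 0)
    (hadd : ∀ x y, p x → p y → p (x + y)) (hneg : ∀ x, p x → p (-x)) :
    ∀ x ∈ setProd ((setProd A B : AddSubgroup S) : Set S) C, p x := by
  refine setProd_induction ?_ h0 hadd hneg
  intro a ha c hc
  refine setProd_induction (p := fun a => p (a * c)) (fun u hu v hv => hmem u hu v hv c hc)
    ?_ (fun x y hx hy => ?_) (fun x hx => ?_) a ha
  · simp only [zero_mul]; exact h0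
  · simp only [add_mul]; exact hadd _ _ hx hy
  · simp only [neg_mul]; exact hneg _ hx

end Helpers

/-- Let `S` be nearly epsilon-strongly `G`-graded. The map `I ↦ I ∩ S_e` is a bijection from
the set of graded (two-sided) ideals of `S` onto the set of `G`-invariant ideals of `S_e`,
with inverse `J ↦ SJS`. In particular, for any graded ideal `I` one has
`S(I ∩ S_e)S = S(I ∩ S_e) = (I ∩ S_e)S = I`. -/
theorem graded_ideal_bijection {G : Type*} [Group G] [DecidableEq G]
    {S : Type*} [NonUnitalRing S] (𝒮 : G → AddSubgroup S)
    [DirectSum.Decomposition 𝒮]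
    (hmul : ∀ {x y : G} {a b : S}, a ∈ 𝒮 x → b ∈ 𝒮 y → a * b ∈ 𝒮 (x * y))
    (hnes : ∀ x : G, ∀ s ∈ 𝒮 x,
      (∃ ε ∈ setProd (𝒮 x : Set S) (𝒮 x⁻¹ : Set S), ε * s = s) ∧
      (∃ ε' ∈ setProd (𝒮 x⁻¹ : Set S) (𝒮 x : Set S), s * ε' = s)) :
    (∀ I : AddSubgroup S, (∀ s : S, ∀ a ∈ I, s * a ∈ I ∧ a * s ∈ I) →
      (∀ a ∈ I, ∀ x : G, ((DirectSum.decompose 𝒮 a) x : S) ∈ I) →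
      IsIdealOfComponent (𝒮 (1 : G)) (I ⊓ 𝒮 (1 : G)) ∧
      (∀ x : G, (gradedConj 𝒮 ((I ⊓ 𝒮 (1 : G) : AddSubgroup S) : Set S) x : Set S) ⊆
        ((I ⊓ 𝒮 (1 : G) : AddSubgroup S) : Set S)) ∧
      SJS ((I ⊓ 𝒮 (1 : G) : AddSubgroup S) : Set S) = I ∧
      setProd (Set.univ : Set S) ((I ⊓ 𝒮 (1 : G) : AddSubgroup S) : Set S) = I ∧
      setProd ((I ⊓ 𝒮 (1 : G) : AddSubgroup S) : Set S) (Set.univ : Set S) = I) ∧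
    (∀ J : AddSubgroup S, IsIdealOfComponent (𝒮 (1 : G)) J →
      (∀ x : G, (gradedConj 𝒮 (J : Set S) x : Set S) ⊆ (J : Set S)) →
      (∀ s : S, ∀ a ∈ SJS (J : Set S), s * a ∈ SJS (J : Set S) ∧ a * s ∈ SJS (J : Set S)) ∧
      (∀ a ∈ SJS (J : Set S), ∀ x : G,
        ((DirectSum.decompose 𝒮 a) x : S) ∈ SJS (J : Set S)) ∧
      SJS (J : Set S) ⊓ 𝒮 (1 : G) = J) := by
  classical
  constructor
  · -- Part 1: from graded ideals to invariant ideals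
    intro I hI hIgr
    set J : AddSubgroup S := I ⊓ 𝒮 (1 : G) with hJdef
    have hJI : ∀ a ∈ J, a ∈ I := fun a ha => (AddSubgroup.mem_inf.mp ha).1
    have hJ1 : ∀ a ∈ J, a ∈ 𝒮 (1 : G) := fun a ha => (AddSubgroup.mem_inf.mp ha).2
    have hmemJ : ∀ a : S, a ∈ I → a ∈ 𝒮 (1 : G) → a ∈ J :=
      fun a h1 h2 => AddSubgroup.mem_inf.mpr ⟨h1, h2⟩
    -- (a) `J` is an ideal of the component `S_e`
    have hidl : IsIdealOfComponent (𝒮 (1 : G)) J := by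
      refine ⟨inf_le_right, fun a ha b hb => ⟨?_, ?_⟩⟩
      · refine hmemJ _ (hI a b (hJI b hb)).1 ?_
        have := hmul ha (hJ1 b hb); rwa [one_mul] at this
      · refine hmemJ _ (hI a b (hJI b hb)).2 ?_
        have := hmul (hJ1 b hb) ha; rwa [one_mul] at this
    -- (b) `J` is `G`-invariant
    have hconj : ∀ x : G, (gradedConj 𝒮 (J : Set S) x : Set S) ⊆ (J : Set S) := by
      intro x a ha
      unfold gradedConj at ha
      refine tripleProd_induction (p := fun a => a ∈ J) ?_ (zero_mem J)
        (fun u v hu hv => add_mem hu hv) (fun u hu => neg_mem hu) a ha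
      intro u hu j hj v hv
      refine hmemJ _ ((hI v _ (hI u j (hJI j hj)).1).2) ?_
      have := hmul (hmul hu (hJ1 j hj)) hv
      rwa [mul_one, inv_mul_cancel] at this
    -- homogeneous elements of `I` lie in `S·J` and in `J·S`
    have lmem : ∀ x : G, ∀ c : S, c ∈ I → c ∈ 𝒮 x →
        c ∈ setProd (Set.univ : Set S) (J : Set S) := by
      intro x c hcI hcx
      obtain ⟨⟨ε, hε, hεc⟩, -⟩ := hnes x c hcx
      rw [← hεc]
      refine setProd_induction
        (p := fun e => e * c ∈ setProd (Set.univ : Set S) (J : Set S)) ?_ ?_ ?_ ?_ ε hε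
      · intro u _ v hv
        rw [mul_assoc]
        refine mem_setProd (Set.mem_univ u) ?_
        refine hmemJ _ (hI v c hcI).1 ?_
        have := hmul hv hcx; rwa [inv_mul_cancel] at this
      · simp only [zero_mul]; exact zero_mem _
      · intro p q hp hq; rw [add_mul]; exact add_mem hp hq
      · intro p hp; rw [neg_mul]; exact neg_mem hp
    have rmem : ∀ x : G, ∀ c : S, c ∈ I → c ∈ 𝒮 x →
        c ∈ setProd (J : Set S) (Set.univ : Set S) := by
      intro x c hcI hcx
      obtain ⟨-, ⟨ε, hε, hεc⟩⟩ := hnes x c hcx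
      rw [← hεc]
      refine setProd_induction
        (p := fun e => c * e ∈ setProd (J : Set S) (Set.univ : Set S)) ?_ ?_ ?_ ?_ ε hε
      · intro u hu v _
        rw [← mul_assoc]
        refine mem_setProd ?_ (Set.mem_univ v)
        refine hmemJ _ (hI u c hcI).2 ?_
        have := hmul hcx hu; rwa [mul_inv_cancel] at this
      · simp only [mul_zero]; exact zero_mem _
      · intro p q hp hq; rw [mul_add]; exact add_mem hp hq
      · intro p hp; rw [mul_neg]; exact neg_mem hp
    have hIle_l : I ≤ setProd (Set.univ : Set S) (J : Set S) := by
      intro a haI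
      rw [← DirectSum.sum_support_decompose 𝒮 a]
      exact sum_mem fun x _ => lmem x _ (hIgr a haI x) (SetLike.coe_mem _)
    have hIle_r : I ≤ setProd (J : Set S) (Set.univ : Set S) := by
      intro a haI
      rw [← DirectSum.sum_support_decompose 𝒮 a]
      exact sum_mem fun x _ => rmem x _ (hIgr a haI x) (SetLike.coe_mem _)
    have hl : setProd (Set.univ : Set S) (J : Set S) = I := by
      refine le_antisymm ?_ hIle_l
      intro a ha
      refine setProd_induction (p := fun a => a ∈ I)
        (fun u _ j hj => (hI u j (hJI j hj)).1) (zero_mem I)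
        (fun x y hx hy => add_mem hx hy) (fun x hx => neg_mem hx) a ha
    have hr : setProd (J : Set S) (Set.univ : Set S) = I := by
      refine le_antisymm ?_ hIle_r
      intro a ha
      refine setProd_induction (p := fun a => a ∈ I)
        (fun j hj u _ => (hI u j (hJI j hj)).2) (zero_mem I)
        (fun x y hx hy => add_mem hx hy) (fun x hx => neg_mem hx) a ha
    have hSJS : SJS (J : Set S) = I := by
      refine le_antisymm ?_ ?_
      · intro a ha
        unfold SJS at ha
        refine tripleProd_induction (p := fun a => a ∈ I) ?_ (zero_mem I)
          (fun x y hx hy => add_mem hx hy) (fun x hx => neg_mem hx) a ha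
        intro u _ j hj t _
        exact (hI t _ (hI u j (hJI j hj)).1).2
      · intro a haI
        have ha' := hIle_r haI
        refine setProd_induction (p := fun a => a ∈ SJS (J : Set S)) ?_ (zero_mem _)
          (fun x y hx hy => add_mem hx hy) (fun x hx => neg_mem hx) a ha'
        intro j hj t ht
        have hj' : j ∈ setProd (Set.univ : Set S) (J : Set S) := lmem 1 j (hJI j hj) (hJ1 j hj)
        exact mem_setProd hj' ht
    exact ⟨hidl, hconj, hSJS, hl, hr⟩
  · -- Part 2: from invariant ideals to graded ideals
    intro J hJ hinv
    -- elements of the form `u * w` with `w ∈ J` lie in `SJS J`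
    have huw : ∀ w ∈ J, ∀ u : S, u * w ∈ SJS (J : Set S) := by
      intro w hw u
      obtain ⟨-, ⟨ε, hε, hεw⟩⟩ := hnes 1 w (hJ.1 hw)
      have key : ∀ e ∈ setProd ((𝒮 (1 : G)⁻¹ : AddSubgroup S) : Set S) ((𝒮 (1 : G) : AddSubgroup S) : Set S),
          u * (w * e) ∈ SJS (J : Set S) := by
        refine setProd_induction ?_ ?_ ?_ ?_
        · intro a ha b hb
          rw [inv_one] at ha
          have hwa : w * a ∈ J := (hJ.2 a ha w hw).2
          have heq : u * (w * (a * b)) = u * (w * a) * b := by simp only [mul_assoc]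
          rw [heq]
          exact mem_tripleProd (Set.mem_univ u) hwa (Set.mem_univ b)
        · simp only [mul_zero]; exact zero_mem _
        · intro x y hx hy; rw [mul_add, mul_add]; exact add_mem hx hy
        · intro x hx; rw [mul_neg, mul_neg]; exact neg_mem hx
      have := key ε hε
      rwa [hεw] at this
    have hJT : ∀ j ∈ J, j ∈ SJS (J : Set S) := by
      intro j hj
      obtain ⟨⟨ε, hε, hεj⟩, -⟩ := hnes 1 j (hJ.1 hj)
      rw [← hεj]
      refine setProd_induction (p := fun e => e * j ∈ SJS (J : Set S)) ?_ ?_ ?_ ?_ ε hε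
      · intro a _ b hb
        rw [inv_one] at hb
        have hbj : b * j ∈ J := (hJ.2 b hb j hj).1
        rw [mul_assoc]
        exact huw _ hbj a
      · simp only [zero_mul]; exact zero_mem _
      · intro x y hx hy; rw [add_mul]; exact add_mem hx hy
      · intro x hx; rw [neg_mul]; exact neg_mem hx
    -- (i) `SJS J` is a two-sided ideal of `S`
    have hideal : ∀ s : S, ∀ a ∈ SJS (J : Set S),
        s * a ∈ SJS (J : Set S) ∧ a * s ∈ SJS (J : Set S) := by
      intro s a ha
      unfold SJS at ha
      constructor
      · refine tripleProd_induction (p := fun a => s * a ∈ SJS (J : Set S)) ?_ ?_ ?_ ?_ a ha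
        · intro u _ j hj t _
          have heq : s * (u * j * t) = s * u * j * t := by simp only [mul_assoc]
          rw [heq]
          exact mem_tripleProd (Set.mem_univ _) hj (Set.mem_univ _)
        · simp only [mul_zero]; exact zero_mem _
        · intro x y hx hy; rw [mul_add]; exact add_mem hx hy
        · intro x hx; rw [mul_neg]; exact neg_mem hx
      · refine tripleProd_induction (p := fun a => a * s ∈ SJS (J : Set S)) ?_ ?_ ?_ ?_ a ha
        · intro u _ j hj t _
          have heq : u * j * t * s = u * j * (t * s) := by simp only [mul_assoc]
          rw [heq]
          exact mem_tripleProd (Set.mem_univ _) hj (Set.mem_univ _)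
        · simp only [zero_mul]; exact zero_mem _
        · intro x y hx hy; rw [add_mul]; exact add_mem hx hy
        · intro x hx; rw [neg_mul]; exact neg_mem hx
    -- (ii) `SJS J` is graded
    have hgr : ∀ a ∈ SJS (J : Set S), ∀ x : G,
        ((DirectSum.decompose 𝒮 a) x : S) ∈ SJS (J : Set S) := by
      intro a ha
      unfold SJS at ha
      refine tripleProd_induction
        (p := fun a => ∀ x : G, ((DirectSum.decompose 𝒮 a) x : S) ∈ SJS (J : Set S))
        ?_ ?_ ?_ ?_ a ha
      · intro u _ j hj t _
        have key : ∀ u t : S, ∀ x : G,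
            ((DirectSum.decompose 𝒮 (u * j * t)) x : S) ∈ SJS (J : Set S) := by
          refine DirectSum.Decomposition.inductionOn 𝒮
            (motive := fun u => ∀ t : S, ∀ x : G,
              ((DirectSum.decompose 𝒮 (u * j * t)) x : S) ∈ SJS (J : Set S)) ?_ ?_ ?_
          · intro t x
            rw [zero_mul, zero_mul]
            simp only [DirectSum.decompose_zero, DirectSum.zero_apply, ZeroMemClass.coe_zero]
            exact zero_mem _
          · rintro y ⟨u, hu⟩
            refine DirectSum.Decomposition.inductionOn 𝒮
              (motive := fun t => ∀ x : G,
                ((DirectSum.decompose 𝒮 (u * j * t)) x : S) ∈ SJS (J : Set S)) ?_ ?_ ?_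
            · intro x
              rw [mul_zero]
              simp only [DirectSum.decompose_zero, DirectSum.zero_apply, ZeroMemClass.coe_zero]
              exact zero_mem _
            · rintro z ⟨t, ht⟩ x
              have hm : u * j * t ∈ 𝒮 (y * z) := by
                have h1 : u * j ∈ 𝒮 y := by
                  have := hmul hu (hJ.1 hj); rwa [mul_one] at this
                exact hmul h1 ht
              by_cases hx : y * z = x
              · rw [← hx, DirectSum.decompose_of_mem_same 𝒮 hm]
                exact mem_tripleProd (Set.mem_univ u) hj (Set.mem_univ t)
              · rw [DirectSum.decompose_of_mem_ne 𝒮 hm hx]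
                exact zero_mem _
            · intro t1 t2 h1 h2 x
              rw [mul_add]
              rw [DirectSum.decompose_add, DirectSum.add_apply, AddSubgroup.coe_add]
              exact add_mem (h1 x) (h2 x)
          · intro u1 u2 h1 h2 t x
            rw [add_mul, add_mul]
            rw [DirectSum.decompose_add, DirectSum.add_apply, AddSubgroup.coe_add]
            exact add_mem (h1 t x) (h2 t x)
        exact key u t
      · intro x
        simp only [DirectSum.decompose_zero, DirectSum.zero_apply, ZeroMemClass.coe_zero]
        exact zero_mem _
      · intro p q hp hq x
        rw [DirectSum.decompose_add, DirectSum.add_apply, AddSubgroup.coe_add]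
        exact add_mem (hp x) (hq x)
      · intro p hp x
        rw [DirectSum.decompose_neg, DFinsupp.neg_apply, AddSubgroup.coe_neg]
        exact neg_mem (hp x)
    -- (iii) `SJS J ⊓ S_e = J`
    have hTJ : ∀ a ∈ SJS (J : Set S), ((DirectSum.decompose 𝒮 a) (1 : G) : S) ∈ J := by
      intro a ha
      unfold SJS at ha
      refine tripleProd_induction
        (p := fun a => ((DirectSum.decompose 𝒮 a) (1 : G) : S) ∈ J) ?_ ?_ ?_ ?_ a ha
      · intro u _ j hj t _
        have key : ∀ u t : S, ((DirectSum.decompose 𝒮 (u * j * t)) (1 : G) : S) ∈ J := by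
          refine DirectSum.Decomposition.inductionOn 𝒮
            (motive := fun u => ∀ t : S,
              ((DirectSum.decompose 𝒮 (u * j * t)) (1 : G) : S) ∈ J) ?_ ?_ ?_
          · intro t
            rw [zero_mul, zero_mul]
            simp only [DirectSum.decompose_zero, DirectSum.zero_apply, ZeroMemClass.coe_zero]
            exact zero_mem _
          · rintro y ⟨u, hu⟩
            refine DirectSum.Decomposition.inductionOn 𝒮
              (motive := fun t => ((DirectSum.decompose 𝒮 (u * j * t)) (1 : G) : S) ∈ J) ?_ ?_ ?_
            · simp only [mul_zero]
              simp only [DirectSum.decompose_zero, DirectSum.zero_apply, ZeroMemClass.coe_zero]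
              exact zero_mem _
            · rintro z ⟨t, ht⟩
              have hm : u * j * t ∈ 𝒮 (y * z) := by
                have h1 : u * j ∈ 𝒮 y := by
                  have := hmul hu (hJ.1 hj); rwa [mul_one] at this
                exact hmul h1 ht
              by_cases hx : y * z = 1
              · rw [← hx, DirectSum.decompose_of_mem_same 𝒮 hm]
                have hz : y⁻¹ = z := inv_eq_of_mul_eq_one_right hx
                refine hinv y⁻¹ ?_
                unfold gradedConj
                rw [inv_inv, hz]
                exact mem_tripleProd hu hj ht
              · rw [DirectSum.decompose_of_mem_ne 𝒮 hm hx]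
                exact zero_mem _
            · intro t1 t2 h1 h2
              rw [mul_add]
              rw [DirectSum.decompose_add, DirectSum.add_apply, AddSubgroup.coe_add]
              exact add_mem h1 h2
          · intro u1 u2 h1 h2 t
            rw [add_mul, add_mul]
            rw [DirectSum.decompose_add, DirectSum.add_apply, AddSubgroup.coe_add]
            exact add_mem (h1 t) (h2 t)
        exact key u t
      · simp only [DirectSum.decompose_zero, DirectSum.zero_apply, ZeroMemClass.coe_zero]
        exact zero_mem _
      · intro p q hp hq
        rw [DirectSum.decompose_add, DirectSum.add_apply, AddSubgroup.coe_add]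
        exact add_mem hp hq
      · intro p hp
        rw [DirectSum.decompose_neg, DFinsupp.neg_apply, AddSubgroup.coe_neg]
        exact neg_mem hp
    have hfin : SJS (J : Set S) ⊓ 𝒮 (1 : G) = J := by
      refine le_antisymm ?_ ?_
      · intro a ha
        rw [AddSubgroup.mem_inf] at ha
        have := hTJ a ha.1
        rwa [DirectSum.decompose_of_mem_same 𝒮 ha.2] at this
      · intro j hj
        exact AddSubgroup.mem_inf.mpr ⟨hJT j hj, hJ.1 hj⟩
    exact ⟨hideal, hgr, hfin⟩
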